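/- Let x: [t₀, t₁] → ℝ^m be continuous with ‖x(t)‖ > 0 for all t, such that t ↦ ½‖x(t)‖² is absolutely continuous and satisfies (d/dt)½‖x(t)‖² ≤ -L‖x(t)‖ almost everywhere for some L > 0. If ψ: [t₀, t₁] → ℝ is Lipschitz with constant L and ψ(t₀) - ‖x(t₀)‖ = κ, then ψ(t₁) - ‖x(t₁)‖ ≥ κ. -/

import Mathlib

/-- Contradiction step of the funnel argument: if `(d/dt)½‖x(t)‖² ≤ -L‖x(t)‖` on `[t₀,t₁]`
and `ψ` is `L`-Lipschitz with `ψ(t₀) - ‖x(t₀)‖ = κ`, then `ψ(t₁) - ‖x(t₁)‖ ≥ κ`. -/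
theorem funnel_contradiction_step (m : ℕ) (t₀ t₁ L κ : ℝ) (ht : t₀ ≤ t₁) (hL : 0 < L)
    (x : ℝ → EuclideanSpace ℝ (Fin m)) (f' : ℝ → ℝ)
    (hxc : ContinuousOn x (Set.Icc t₀ t₁))
    (hxpos : ∀ t ∈ Set.Icc t₀ t₁, 0 < ‖x t‖)
    (hder : ∀ t ∈ Set.Icc t₀ t₁,
      HasDerivWithinAt (fun s => (1 / 2) * ‖x s‖ ^ 2) (f' t) (Set.Icc t₀ t₁) t)
    (hineq : ∀ t ∈ Set.Icc t₀ t₁, f' t ≤ -L * ‖x t‖)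
    (ψ : ℝ → ℝ) (hψ : LipschitzOnWith (Real.toNNReal L) ψ (Set.Icc t₀ t₁))
    (hκ : ψ t₀ - ‖x t₀‖ = κ) :
    ψ t₁ - ‖x t₁‖ ≥ κ := by
  set F : ℝ → ℝ := fun t => ‖x t‖ + L * t with hF
  -- at interior points, F has derivative f' t / ‖x t‖ + L ≤ 0
  have hint : interior (Set.Icc t₀ t₁) = Set.Ioo t₀ t₁ := interior_Icc
  have hkey : ∀ t ∈ Set.Ioo t₀ t₁, HasDerivAt F (f' t / ‖x t‖ + L) t := by
    intro t htmem
    have htI : t ∈ Set.Icc t₀ t₁ := Set.Ioo_subset_Icc_self htmem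
    have hnhds : Set.Icc t₀ t₁ ∈ nhds t := by
      rw [← hint] at htmem
      exact mem_interior_iff_mem_nhds.mp htmem
    have hg : HasDerivAt (fun s => (1 / 2) * ‖x s‖ ^ 2) (f' t) t :=
      (hder t htI).hasDerivAt hnhds
    have hpos := hxpos t htI
    -- sqrt ∘ (2 * g)
    have h2g : HasDerivAt (fun s => 2 * ((1 / 2) * ‖x s‖ ^ 2)) (2 * f' t) t :=
      hg.const_mul 2
    have hsq : HasDerivAt Real.sqrt (1 / (2 * Real.sqrt (2 * ((1 / 2) * ‖x t‖ ^ 2))))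
        (2 * ((1 / 2) * ‖x t‖ ^ 2)) := by
      apply Real.hasDerivAt_sqrt
      positivity
    have hcomp := hsq.comp t h2g
    have heq : ∀ s, Real.sqrt (2 * ((1 / 2) * ‖x s‖ ^ 2)) = ‖x s‖ := by
      intro s
      rw [show (2 : ℝ) * ((1 / 2) * ‖x s‖ ^ 2) = ‖x s‖ ^ 2 by ring,
        Real.sqrt_sq (norm_nonneg _)]
    have hnorm : HasDerivAt (fun s => ‖x s‖) (f' t / ‖x t‖) t := by
      have : HasDerivAt (fun s => Real.sqrt (2 * ((1 / 2) * ‖x s‖ ^ 2)))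
          (f' t / ‖x t‖) t := by
        refine hcomp.congr_deriv (Eq.symm ?_)
        rw [heq t]
        field_simp
      exact this.congr_of_eventuallyEq (Filter.Eventually.of_forall fun s => (heq s).symm)
    have hsum := hnorm.add ((hasDerivAt_id t).const_mul L)
    rw [mul_one] at hsum
    exact hsum
  have hFc : ContinuousOn F (Set.Icc t₀ t₁) :=
    (hxc.norm.add (continuous_const.mul continuous_id).continuousOn)
  have hanti : AntitoneOn F (Set.Icc t₀ t₁) := by
    apply antitoneOn_of_deriv_nonpos (convex_Icc t₀ t₁) hFc
    · intro t htmem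
      rw [hint] at htmem
      exact (hkey t htmem).differentiableAt.differentiableWithinAt
    · intro t htmem
      rw [hint] at htmem
      rw [(hkey t htmem).deriv]
      have htI : t ∈ Set.Icc t₀ t₁ := Set.Ioo_subset_Icc_self htmem
      have hpos := hxpos t htI
      have := hineq t htI
      have : f' t / ‖x t‖ ≤ -L := by
        rw [div_le_iff₀ hpos]
        linarith
      linarith
  have hx01 : ‖x t₁‖ + L * t₁ ≤ ‖x t₀‖ + L * t₀ :=
    hanti (Set.left_mem_Icc.mpr ht) (Set.right_mem_Icc.mpr ht) ht
  have hψb : |ψ t₁ - ψ t₀| ≤ L * (t₁ - t₀) := by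
    have := hψ.dist_le_mul t₁ (Set.right_mem_Icc.mpr ht) t₀ (Set.left_mem_Icc.mpr ht)
    rw [Real.dist_eq, Real.coe_toNNReal L hL.le, Real.dist_eq,
      abs_of_nonneg (sub_nonneg.mpr ht)] at this
    exact this
  have := abs_le.mp hψb
  linarith [this.1]
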